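/- arXiv:2501.13695 — 9 statements merged into one kernel-verified Lean document; each statement's English description precedes it below -/
import Mathlib

section
/- Let f : ℝ≥0 → ℝ be continuous. If f satisfies f(x+y+z) + f(z) ≥ f(x+z) + f(y+z) for all x, y, z ≥ 0, then f is convex on [0,∞). -/
theorem stmt_1 (f : ℝ → ℝ) (hf : ContinuousOn f (Set.Ici 0))
    (h : ∀ x y z : ℝ, 0 ≤ x → 0 ≤ y → 0 ≤ z →
      f (x + z) + f (y + z) ≤ f (x + y + z) + f z) :
    ConvexOn ℝ (Set.Ici 0) f := by
  -- midpoint convexity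
  have mid : ∀ u v : ℝ, 0 ≤ u → 0 ≤ v → f ((u + v) / 2) ≤ (f u + f v) / 2 := by
    intro u v hu hv
    rcases le_total u v with huv | huv
    · have H := h ((v - u) / 2) ((v - u) / 2) u (by linarith) (by linarith) hu
      have e1 : (v - u) / 2 + u = (u + v) / 2 := by ring
      have e2 : (v - u) / 2 + (v - u) / 2 + u = v := by ring
      rw [e1, e2] at H; linarith
    · have H := h ((u - v) / 2) ((u - v) / 2) v (by linarith) (by linarith) hv
      have e1 : (u - v) / 2 + v = (u + v) / 2 := by ring
      have e2 : (u - v) / 2 + (u - v) / 2 + v = u := by ring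
      rw [e1, e2] at H; linarith
  have key : ∀ a b : ℝ, 0 ≤ a → 0 ≤ b → ∀ t ∈ Set.Icc (0 : ℝ) 1,
      f ((1 - t) * a + t * b) ≤ (1 - t) * f a + t * f b := by
    intro a b ha hb
    set g : ℝ → ℝ := fun t => (1 - t) * a + t * b with hg
    have hgmem : ∀ t ∈ Set.Icc (0 : ℝ) 1, g t ∈ Set.Ici (0 : ℝ) := by
      intro t ht
      have h1 : 0 ≤ (1 - t) * a := mul_nonneg (by linarith [ht.2]) ha
      have h2 : 0 ≤ t * b := mul_nonneg ht.1 hb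
      simpa [hg] using add_nonneg h1 h2
    set S : Set ℝ := {t ∈ Set.Icc (0 : ℝ) 1 |
      f (g t) ≤ (1 - t) * f a + t * f b} with hS
    have hgc : Continuous g := by fun_prop
    -- S is closed
    have hScl : IsClosed S := by
      have hcomp : ContinuousOn (fun t => f (g t) - ((1 - t) * f a + t * f b))
          (Set.Icc (0 : ℝ) 1) := by
        apply ContinuousOn.sub
        · exact hf.comp hgc.continuousOn hgmem
        · fun_prop
      have : S = Set.Icc (0 : ℝ) 1 ∩
          (fun t => f (g t) - ((1 - t) * f a + t * f b)) ⁻¹' Set.Iic 0 := by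
        ext t
        simp only [hS, Set.mem_setOf_eq, Set.mem_inter_iff, Set.mem_preimage,
          Set.mem_Iic, Set.mem_sep_iff]
        constructor
        · rintro ⟨h1, h2⟩; exact ⟨h1, by linarith⟩
        · rintro ⟨h1, h2⟩; exact ⟨h1, by linarith⟩
      rw [this]
      exact hcomp.preimage_isClosed_of_isClosed isClosed_Icc isClosed_Iic
    have h0 : (0 : ℝ) ∈ S := by
      constructor
      · exact ⟨le_refl 0, zero_le_one⟩
      · simp [hg]
    have h1 : (1 : ℝ) ∈ S := by
      constructor
      · exact ⟨zero_le_one, le_refl 1⟩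
      · simp [hg]
    -- S is closed under midpoints
    have hmid : ∀ s ∈ S, ∀ t ∈ S, (s + t) / 2 ∈ S := by
      rintro s ⟨hs1, hs2⟩ t ⟨ht1, ht2⟩
      have hm1 : (s + t) / 2 ∈ Set.Icc (0 : ℝ) 1 := by
        constructor <;> [linarith [hs1.1, ht1.1]; linarith [hs1.2, ht1.2]]
      refine ⟨hm1, ?_⟩
      have hgm : g ((s + t) / 2) = (g s + g t) / 2 := by simp only [hg]; ring
      have h3 := mid (g s) (g t) (hgmem s hs1) (hgmem t ht1)
      rw [hgm]
      calc f ((g s + g t) / 2) ≤ (f (g s) + f (g t)) / 2 := h3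
        _ ≤ (((1 - s) * f a + s * f b) + ((1 - t) * f a + t * f b)) / 2 := by linarith
        _ = (1 - (s + t) / 2) * f a + (s + t) / 2 * f b := by ring
    -- dyadic rationals are in S
    have hdyad : ∀ n k : ℕ, k ≤ 2 ^ n → ((k : ℝ) / 2 ^ n) ∈ S := by
      intro n
      induction n with
      | zero =>
        intro k hk
        interval_cases k
        · simpa using h0
        · simpa using h1
      | succ n ih =>
        intro k hk
        rcases Nat.even_or_odd k with ⟨m, hm⟩ | ⟨m, hm⟩
        · subst hm
          have hm2 : m ≤ 2 ^ n := by
            have : 2 * m ≤ 2 * 2 ^ n := by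
              rw [← pow_succ'] at *; omega
            omega
          have := ih m hm2
          have e : ((m + m : ℕ) : ℝ) / 2 ^ (n + 1) = (m : ℝ) / 2 ^ n := by
            push_cast
            rw [pow_succ]
            ring
          rwa [e]
        · subst hm
          have hm2 : m + 1 ≤ 2 ^ n := by
            have : 2 ^ (n + 1) = 2 * 2 ^ n := by rw [pow_succ]; ring
            omega
          have h1' := ih m (by omega)
          have h2' := ih (m + 1) hm2
          have := hmid _ h1' _ h2'
          have e : ((2 * m + 1 : ℕ) : ℝ) / 2 ^ (n + 1)
              = ((m : ℝ) / 2 ^ n + ((m + 1 : ℕ) : ℝ) / 2 ^ n) / 2 := by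
            push_cast
            rw [pow_succ]
            field_simp
            ring
          rwa [e]
    -- any t in [0,1] is a limit of dyadics
    intro t ht
    have hmem : t ∈ S := by
      set d : ℕ → ℝ := fun n => (⌊t * 2 ^ n⌋₊ : ℝ) / 2 ^ n with hd
      have hdmem : ∀ n, d n ∈ S := by
        intro n
        apply hdyad
        calc ⌊t * 2 ^ n⌋₊ ≤ ⌊(2 : ℝ) ^ n⌋₊ := by
              apply Nat.floor_le_floor
              nlinarith [ht.2, pow_pos (by norm_num : (0:ℝ) < 2) n]
          _ = 2 ^ n := by
              rw [show ((2 : ℝ) ^ n) = ((2 ^ n : ℕ) : ℝ) by push_cast; ring,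
                Nat.floor_natCast]
      have hconv : Filter.Tendsto d Filter.atTop (nhds t) := by
        have hle : ∀ n, d n ≤ t := by
          intro n
          have hp : (0 : ℝ) < 2 ^ n := pow_pos (by norm_num) n
          have := Nat.floor_le (mul_nonneg ht.1 hp.le)
          rw [hd]
          rw [div_le_iff₀ hp]
          simpa using this
        have hge : ∀ n, t - (1 / 2) ^ n ≤ d n := by
          intro n
          have hp : (0 : ℝ) < 2 ^ n := pow_pos (by norm_num) n
          have := Nat.lt_floor_add_one (t * 2 ^ n)
          rw [hd]
          rw [sub_le_iff_le_add, div_add' _ _ _ (ne_of_gt hp), le_div_iff₀ hp]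
          have e : (1 / 2 : ℝ) ^ n * 2 ^ n = 1 := by
            rw [← mul_pow]; norm_num
          nlinarith [this]
        have hlim : Filter.Tendsto (fun n => t - (1 / 2 : ℝ) ^ n)
            Filter.atTop (nhds t) := by
          have : Filter.Tendsto (fun n => (1 / 2 : ℝ) ^ n) Filter.atTop (nhds 0) :=
            tendsto_pow_atTop_nhds_zero_of_lt_one (by norm_num) (by norm_num)
          simpa using (tendsto_const_nhds.sub this)
        exact tendsto_of_tendsto_of_tendsto_of_le_of_le hlim tendsto_const_nhds
          hge hle
      exact hScl.mem_of_tendsto hconv (Filter.Eventually.of_forall hdmem)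
    exact hmem.2
  refine ⟨convex_Ici 0, ?_⟩
  intro x hx y hy p q hp hq hpq
  have := key x y hx hy q ⟨hq, by linarith⟩
  have hp' : p = 1 - q := by linarith
  simp only [smul_eq_mul]
  rw [hp']
  exact this
end

section
/- If f : ℝ≥0 → ℝ is α-strongly convex (i.e., f − (α/2)x² is convex) with f(0) ≤ 0, then f(x+y+z) + f(z) ≥ f(x+z) + f(y+z) + αxy for all x, y, z ≥ 0. -/
theorem stmt_6 (f : ℝ → ℝ) (α : ℝ) (hα : 0 < α)
    (hconv : ConvexOn ℝ (Set.Ici 0) (fun x => f x - α / 2 * x ^ 2))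
    (h0 : f 0 ≤ 0) :
    ∀ x y z : ℝ, 0 ≤ x → 0 ≤ y → 0 ≤ z →
      f (x + z) + f (y + z) + α * x * y ≤ f (x + y + z) + f z := by
  intro x y z hx hy hz
  rcases eq_or_lt_of_le (by linarith : (0:ℝ) ≤ x + y) with hxy | hxy
  · have hx0 : x = 0 := by linarith
    have hy0 : y = 0 := by linarith
    subst hx0; subst hy0
    norm_num
  · set t : ℝ := x / (x + y) with ht
    set s : ℝ := y / (x + y) with hs
    have hne : x + y ≠ 0 := ne_of_gt hxy
    have hts : t + s = 1 := by rw [ht, hs, ← add_div, div_self hne]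
    have ht0 : 0 ≤ t := div_nonneg hx (le_of_lt hxy)
    have hs0 : 0 ≤ s := div_nonneg hy (le_of_lt hxy)
    have hmemz : z ∈ Set.Ici (0:ℝ) := hz
    have hmems : x + y + z ∈ Set.Ici (0:ℝ) := by
      show (0:ℝ) ≤ x + y + z; linarith
    have h1 := hconv.2 hmemz hmems hs0 ht0 (by linarith)
    have h2 := hconv.2 hmemz hmems ht0 hs0 (by linarith)
    have e1 : s • z + t • (x + y + z) = x + z := by
      have h : t * (x + y) = x := by rw [ht]; exact div_mul_cancel₀ x hne
      show s * z + t * (x + y + z) = x + z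
      nlinarith [h]
    have e2 : t • z + s • (x + y + z) = y + z := by
      have h : s * (x + y) = y := by rw [hs]; exact div_mul_cancel₀ y hne
      show t * z + s * (x + y + z) = y + z
      nlinarith [h]
    rw [e1] at h1
    rw [e2] at h2
    simp only [smul_eq_mul] at h1 h2
    have hA : s * (f z - α/2*z^2) + t * (f z - α/2*z^2) = f z - α/2*z^2 := by
      rw [← add_mul, add_comm s t, hts, one_mul]
    have hB : t * (f (x+y+z) - α/2*(x+y+z)^2) + s * (f (x+y+z) - α/2*(x+y+z)^2)
        = f (x+y+z) - α/2*(x+y+z)^2 := by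
      rw [← add_mul, hts, one_mul]
    have key : (f (x+z) - α/2*(x+z)^2) + (f (y+z) - α/2*(y+z)^2) ≤
        (f z - α/2*z^2) + (f (x+y+z) - α/2*(x+y+z)^2) := by
      linarith [h1, h2]
    nlinarith [key]
end

section
/- For all real numbers x, y, z ≥ 0, the double inequality e^{xy} ≥ (1+z)(1+x+y+z) / ((1+x+z)(1+y+z)) ≥ e^{−xy} holds. -/
theorem stmt_7 (x y z : ℝ) (hx : 0 ≤ x) (hy : 0 ≤ y) (hz : 0 ≤ z) :
    Real.exp (-(x * y)) ≤
      (1 + z) * (1 + x + y + z) / ((1 + x + z) * (1 + y + z)) ∧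
    (1 + z) * (1 + x + y + z) / ((1 + x + z) * (1 + y + z)) ≤ Real.exp (x * y) := by
  have hD : 0 < (1 + x + z) * (1 + y + z) := by positivity
  have h1 : 1 + x * y ≤ Real.exp (x * y) := by
    have := Real.add_one_le_exp (x * y); linarith
  have hpos : 0 < 1 + x * y := by positivity
  constructor
  · rw [Real.exp_neg, le_div_iff₀ hD, inv_mul_le_iff₀ (Real.exp_pos _)]
    calc (1 + x + z) * (1 + y + z)
        ≤ (1 + x * y) * ((1 + z) * (1 + x + y + z)) := by nlinarith [mul_nonneg hx hy, mul_nonneg hz hz, mul_nonneg (mul_nonneg hx hy) hz]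
      _ ≤ Real.exp (x * y) * ((1 + z) * (1 + x + y + z)) := by
          have : (0:ℝ) ≤ (1 + z) * (1 + x + y + z) := by positivity
          exact mul_le_mul_of_nonneg_right h1 this
  · rw [div_le_iff₀ hD]
    calc (1 + z) * (1 + x + y + z) ≤ (1 + x + z) * (1 + y + z) := by nlinarith [mul_nonneg hx hy]
      _ ≤ Real.exp (x * y) * ((1 + x + z) * (1 + y + z)) := by
          nlinarith [Real.one_le_exp (mul_nonneg hx hy), hD]
end

section
/- The Shannon entropy Φ(x) = −∑_{k=1}^{n} x_k log x_k is strongly subadditive on the positive orthant of ℝⁿ: for all x, y, z with nonnegative coordinates, Φ(x+y+z) + Φ(z) ≤ Φ(x+z) + Φ(y+z), and Φ(x+y) ≤ Φ(x) + Φ(y). -/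
open Real

/-- monotonicity: for `0 ≤ c ≤ A` and `0 ≤ b`,
`c * (log (b+c) - log c) ≤ A * (log (b+A) - log A)`. -/
lemma mono_aux {a b c : ℝ} (hb : 0 ≤ b) (hc : 0 ≤ c) (hca : c ≤ a) :
    c * (Real.log (b + c) - Real.log c) ≤ a * (Real.log (b + a) - Real.log a) := by
  rcases eq_or_lt_of_le hc with rfl | hc0
  · simp only [add_zero, Real.log_zero, sub_zero, zero_mul]
    rcases eq_or_lt_of_le hca with rfl | ha0
    · simp
    · have : Real.log a ≤ Real.log (b + a) :=
        Real.log_le_log (by linarith) (by linarith)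
      nlinarith
  · have ha0 : 0 < a := lt_of_lt_of_le hc0 hca
    have hbc : 0 < b + c := by linarith
    have hba : 0 < b + a := by linarith
    -- log X ≤ X - 1 with X = (b+c)*a/(c*(b+a))
    have hX : 0 < (b + c) * a / (c * (b + a)) := by positivity
    have h1 : Real.log ((b + c) * a / (c * (b + a))) ≤ (b + c) * a / (c * (b + a)) - 1 :=
      Real.log_le_sub_one_of_pos hX
    -- log (a/(b+a)) ≤ a/(b+a) - 1
    have h2 : Real.log (a / (b + a)) ≤ a / (b + a) - 1 :=
      Real.log_le_sub_one_of_pos (by positivity)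
    have e1 : Real.log ((b + c) * a / (c * (b + a)))
        = (Real.log (b + c) - Real.log c) - (Real.log (b + a) - Real.log a) := by
      rw [Real.log_div (by positivity) (by positivity), Real.log_mul (by positivity) ha0.ne',
        Real.log_mul hc0.ne' hba.ne']
      ring
    have e2 : Real.log (a / (b + a)) = Real.log a - Real.log (b + a) := by
      rw [Real.log_div ha0.ne' hba.ne']
    rw [e1] at h1
    rw [e2] at h2
    -- c * ((Lbc - Lc) - (Lba - La)) ≤ c * ((b+c)a/(c(b+a)) - 1) = b(a-c)/(b+a)
    -- (a - c) * (Lba - La) ≥ (a-c) * b/(b+a)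
    have key1 : c * ((Real.log (b + c) - Real.log c) - (Real.log (b + a) - Real.log a))
        ≤ b * (a - c) / (b + a) := by
      have := mul_le_mul_of_nonneg_left h1 hc0.le
      calc c * ((Real.log (b + c) - Real.log c) - (Real.log (b + a) - Real.log a))
          ≤ c * ((b + c) * a / (c * (b + a)) - 1) := this
        _ = b * (a - c) / (b + a) := by field_simp; ring
    have key2 : b * (a - c) / (b + a) ≤ (a - c) * (Real.log (b + a) - Real.log a) := by
      have hac : 0 ≤ a - c := by linarith
      have h2' : 1 - a / (b + a) ≤ Real.log (b + a) - Real.log a := by linarith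
      have : b / (b + a) ≤ Real.log (b + a) - Real.log a := by
        have : 1 - a / (b + a) = b / (b + a) := by field_simp; ring
        linarith [this ▸ h2']
      calc b * (a - c) / (b + a) = (a - c) * (b / (b + a)) := by ring
        _ ≤ (a - c) * (Real.log (b + a) - Real.log a) :=
          mul_le_mul_of_nonneg_left this hac
    nlinarith [key1, key2]

/-- pointwise strong subadditivity of `negMulLog`. -/
lemma key_ineq {a b c : ℝ} (ha : 0 ≤ a) (hb : 0 ≤ b) (hc : 0 ≤ c) :
    Real.negMulLog (a + b + c) + Real.negMulLog c
      ≤ Real.negMulLog (a + c) + Real.negMulLog (b + c) := by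
  simp only [Real.negMulLog, neg_mul]
  -- equivalent: (a+c) log (a+c) + (b+c) log (b+c) ≤ (a+b+c) log (a+b+c) + c log c
  rw [show a + b + c = (a + c) + b by ring]
  have hmono := mono_aux (a := a + c) (b := b) (c := c) hb hc (by linarith)
  -- term2 : b * (log (a+c+b) - log (b+c)) ≥ 0
  have hterm2 : 0 ≤ b * (Real.log ((a + c) + b) - Real.log (b + c)) := by
    rcases eq_or_lt_of_le hb with rfl | hb0
    · simp
    · have : Real.log (b + c) ≤ Real.log ((a + c) + b) :=
        Real.log_le_log (by linarith) (by linarith)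
      nlinarith
  -- term1 : (a+c) * (log (a+c+b) - log (a+c)) ≥ c * (log (b+c) - log c)  [from hmono]
  have hmono' : c * (Real.log (b + c) - Real.log c)
      ≤ (a + c) * (Real.log (b + (a + c)) - Real.log (a + c)) := hmono
  have hcomm : Real.log (b + (a + c)) = Real.log ((a + c) + b) := by ring_nf
  rw [hcomm] at hmono'
  nlinarith [hmono', hterm2]

theorem stmt_9 (n : ℕ) (Φ : (Fin n → ℝ) → ℝ)
    (hΦ : ∀ x : Fin n → ℝ, Φ x = ∑ k, Real.negMulLog (x k)) :
    (∀ x y z : Fin n → ℝ, (∀ k, 0 ≤ x k) → (∀ k, 0 ≤ y k) → (∀ k, 0 ≤ z k) →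
      Φ (x + y + z) + Φ z ≤ Φ (x + z) + Φ (y + z)) ∧
    (∀ x y : Fin n → ℝ, (∀ k, 0 ≤ x k) → (∀ k, 0 ≤ y k) →
      Φ (x + y) ≤ Φ x + Φ y) := by
  have main : ∀ x y z : Fin n → ℝ, (∀ k, 0 ≤ x k) → (∀ k, 0 ≤ y k) → (∀ k, 0 ≤ z k) →
      Φ (x + y + z) + Φ z ≤ Φ (x + z) + Φ (y + z) := by
    intro x y z hx hy hz
    simp only [hΦ, Pi.add_apply, ← Finset.sum_add_distrib]
    exact Finset.sum_le_sum fun k _ => key_ineq (hx k) (hy k) (hz k)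
  refine ⟨main, fun x y hx hy => ?_⟩
  have := main x y 0 hx hy (fun k => le_refl 0)
  simp only [add_zero, hΦ, Pi.zero_apply, Real.negMulLog_zero, Finset.sum_const_zero] at this ⊢
  linarith
end

section
/- For p ∈ (1,∞), the function Φ(f) = ∫ |f|^p is strongly superadditive on the cone of nonnegative functions in L^p(ℝ): for all f, g, h ∈ L^p(ℝ) with f, g, h ≥ 0 a.e., ∫(f+g+h)^p + ∫h^p ≥ ∫(f+h)^p + ∫(g+h)^p. -/
open MeasureTheory

lemma key_aux (p : ℝ) (hp : 1 ≤ p) (a : ℝ) (ha : 0 ≤ a) :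
    MonotoneOn (fun t : ℝ => (t + a) ^ p - t ^ p) (Set.Ici 0) := by
  have hF : ∀ t : ℝ, HasDerivAt (fun t : ℝ => (t + a) ^ p - t ^ p)
      (1 * p * (t + a) ^ (p - 1) - 1 * p * t ^ (p - 1)) t := by
    intro t
    exact (((hasDerivAt_id t).add_const a).rpow_const (Or.inr hp)).sub
      ((hasDerivAt_id t).rpow_const (Or.inr hp))
  apply monotoneOn_of_deriv_nonneg (convex_Ici 0)
  · exact fun t _ => ((hF t).continuousAt).continuousWithinAt
  · exact fun t _ => ((hF t).differentiableAt).differentiableWithinAt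
  · intro t ht
    rw [interior_Ici] at ht
    rw [(hF t).deriv]
    have h1 : t ^ (p - 1) ≤ (t + a) ^ (p - 1) :=
      Real.rpow_le_rpow (le_of_lt ht) (by linarith) (by linarith)
    have hp0 : (0:ℝ) ≤ p := by linarith
    nlinarith

lemma key_pt (p : ℝ) (hp : 1 ≤ p) (a b c : ℝ) (ha : 0 ≤ a) (hb : 0 ≤ b) (hc : 0 ≤ c) :
    (a + c) ^ p + (b + c) ^ p ≤ (a + b + c) ^ p + c ^ p := by
  have := key_aux p hp a ha (Set.mem_Ici.2 hc) (Set.mem_Ici.2 (by positivity : (0:ℝ) ≤ b + c))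
    (by linarith)
  simp only at this
  have e1 : c + a = a + c := by ring
  have e2 : b + c + a = a + b + c := by ring
  rw [e1, e2] at this
  linarith

theorem stmt_11 (p : ℝ) (hp : 1 < p) (f g h : ℝ → ℝ)
    (hf : MemLp f (ENNReal.ofReal p) volume)
    (hg : MemLp g (ENNReal.ofReal p) volume)
    (hh : MemLp h (ENNReal.ofReal p) volume)
    (hf0 : ∀ᵐ x, 0 ≤ f x) (hg0 : ∀ᵐ x, 0 ≤ g x) (hh0 : ∀ᵐ x, 0 ≤ h x) :
    (∫ x, (f x + h x) ^ p) + (∫ x, (g x + h x) ^ p) ≤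
      (∫ x, (f x + g x + h x) ^ p) + ∫ x, (h x) ^ p := by
  have hp0 : (0:ℝ) < p := by linarith
  have htR : (ENNReal.ofReal p).toReal = p := ENNReal.toReal_ofReal hp0.le
  have hne : ENNReal.ofReal p ≠ 0 := by simp [ENNReal.ofReal_eq_zero]; linarith
  have hnt : ENNReal.ofReal p ≠ ⊤ := ENNReal.ofReal_ne_top
  -- integrability helper
  have integ : ∀ (u : ℝ → ℝ), MemLp u (ENNReal.ofReal p) volume → (∀ᵐ x, 0 ≤ u x) →
      Integrable (fun x => u x ^ p) volume := by
    intro u hu hu0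
    have := hu.integrable_norm_rpow hne hnt
    rw [htR] at this
    refine this.congr ?_
    filter_upwards [hu0] with x hx
    rw [Real.norm_eq_abs, abs_of_nonneg hx]
  have iA := integ _ (hf.add hh) (by filter_upwards [hf0, hh0] with x h1 h2; exact add_nonneg h1 h2)
  have iB := integ _ (hg.add hh) (by filter_upwards [hg0, hh0] with x h1 h2; exact add_nonneg h1 h2)
  have iC := integ _ ((hf.add hg).add hh)
    (by filter_upwards [hf0, hg0, hh0] with x h1 h2 h3; exact add_nonneg (add_nonneg h1 h2) h3)
  have iD := integ _ hh hh0
  simp only [Pi.add_apply] at iA iB iC iD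
  rw [← integral_add iA iB, ← integral_add iC iD]
  apply integral_mono_ae (iA.add iB) (iC.add iD)
  filter_upwards [hf0, hg0, hh0] with x h1 h2 h3
  exact key_pt p hp.le _ _ _ h1 h2 h3
end

section
/- The determinant is strongly superadditive on positive semidefinite matrices: for all real symmetric positive semidefinite N×N matrices A, B, C, det(A+B+C) + det(C) ≥ det(A+C) + det(B+C). -/
open Matrix Finset
open scoped MatrixOrder

variable {n : Type*} [Fintype n] [DecidableEq n]

-- Lemma 1: product inequality
lemma prod_one_add_ge {ι : Type*} {s : Finset ι} (hs : s.Nonempty) (f : ι → ℝ)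
    (hf : ∀ i ∈ s, 0 ≤ f i) : 1 + ∏ i ∈ s, f i ≤ ∏ i ∈ s, (1 + f i) := by
  induction hs using Finset.Nonempty.cons_induction with
  | singleton i => simp
  | cons a s ha hs ih =>
    rw [Finset.prod_cons, Finset.prod_cons]
    have h0 : ∀ i ∈ s, 0 ≤ f i := fun i hi => hf i (Finset.mem_cons_of_mem hi)
    have ha0 : 0 ≤ f a := hf a (Finset.mem_cons_self a s)
    have hp : 0 ≤ ∏ i ∈ s, f i := Finset.prod_nonneg h0
    calc 1 + f a * ∏ i ∈ s, f i
        ≤ (1 + f a) * (1 + ∏ i ∈ s, f i) := by nlinarith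
      _ ≤ (1 + f a) * ∏ i ∈ s, (1 + f i) := by
          have := ih h0
          nlinarith [Finset.prod_nonneg (fun i hi => by nlinarith [h0 i hi] : ∀ i ∈ s, (0:ℝ) ≤ 1 + f i)]

-- det of 1 + PSD
lemma det_one_add_psd [Nonempty n] {S : Matrix n n ℝ} (hS : S.PosSemidef) :
    1 + S.det ≤ (1 + S).det := by
  have hH := hS.isHermitian
  have hst := hH.spectral_theorem
  have hU : ((hH.eigenvectorUnitary : Matrix n n ℝ)) * (star (hH.eigenvectorUnitary : Matrix n n ℝ)) = 1 :=
    (Matrix.mem_unitaryGroup_iff).mp hH.eigenvectorUnitary.2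
  have h1 : (1 : Matrix n n ℝ) + S
      = (hH.eigenvectorUnitary : Matrix n n ℝ) * (1 + diagonal (RCLike.ofReal ∘ hH.eigenvalues))
        * (star (hH.eigenvectorUnitary : Matrix n n ℝ)) := by
    rw [mul_add, add_mul, mul_one, hU]
    exact congrArg (1 + ·) (hst.trans (Unitary.conjStarAlgAut_apply _ _))
  have hdet : (1 + S).det = ((1 : Matrix n n ℝ) + diagonal (RCLike.ofReal ∘ hH.eigenvalues)).det := by
    rw [h1, Matrix.det_mul, Matrix.det_mul]
    have := congrArg Matrix.det hU
    rw [Matrix.det_mul, Matrix.det_one] at this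
    linear_combination ((1 : Matrix n n ℝ) + diagonal (RCLike.ofReal ∘ hH.eigenvalues)).det * this
  have hdd : (1 : Matrix n n ℝ) + diagonal (RCLike.ofReal ∘ hH.eigenvalues)
      = diagonal (fun i => 1 + hH.eigenvalues i) := by
    rw [← Matrix.diagonal_one, Matrix.diagonal_add]
    rfl
  rw [hdet, hdd, Matrix.det_diagonal, hH.det_eq_prod_eigenvalues]
  exact prod_one_add_ge Finset.univ_nonempty _ (fun i _ => hS.eigenvalues_nonneg i)

lemma psd_det_nonneg {S : Matrix n n ℝ} (hS : S.PosSemidef) : 0 ≤ S.det := by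
  obtain ⟨R, hRR⟩ : ∃ R : Matrix n n ℝ, R * R = S := ⟨CFC.sqrt S, CFC.sqrt_mul_sqrt_self S hS.nonneg⟩
  subst hRR
  rw [Matrix.det_mul]
  exact mul_self_nonneg _

lemma psd_posdef_of_det_ne_zero {S : Matrix n n ℝ} (hS : S.PosSemidef) (hd : S.det ≠ 0) :
    S.PosDef := by
  obtain ⟨R, hherm, h⟩ : ∃ R : Matrix n n ℝ, Rᴴ = R ∧ R * R = S :=
    ⟨CFC.sqrt S, (CFC.sqrt_nonneg S).posSemidef.isHermitian, CFC.sqrt_mul_sqrt_self S hS.nonneg⟩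
  have hds : R.det ≠ 0 := by
    intro h0
    apply hd
    rw [← h, Matrix.det_mul, h0, mul_zero]
  refine Matrix.PosDef.of_dotProduct_mulVec_pos hS.isHermitian fun x hx => ?_
  have hinj : Function.Injective (R.mulVec) :=
    Matrix.mulVec_injective_iff_isUnit.mpr ((Matrix.isUnit_iff_isUnit_det _).mpr hds.isUnit)
  have hy : R *ᵥ x ≠ 0 := by
    intro h0
    exact hx (hinj (by simpa using h0))
  have : dotProduct (star x) (S *ᵥ x) = dotProduct (star (R *ᵥ x)) (R *ᵥ x) := by
    rw [← h, ← Matrix.mulVec_mulVec, Matrix.dotProduct_mulVec, star_mulVec, hherm,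
      ← Matrix.dotProduct_mulVec, Matrix.dotProduct_mulVec]
  rw [this]
  exact Matrix.dotProduct_star_self_pos_iff.mpr hy

lemma det_superadd_core [Nonempty n] {A B : Matrix n n ℝ} (hA : A.PosDef) (hB : B.PosSemidef) :
    A.det + B.det ≤ (A + B).det := by
  obtain ⟨R, hherm, h⟩ : ∃ R : Matrix n n ℝ, Rᴴ = R ∧ R * R = A :=
    ⟨CFC.sqrt A, (CFC.sqrt_nonneg A).posSemidef.isHermitian, CFC.sqrt_mul_sqrt_self A hA.posSemidef.nonneg⟩
  have hdA : 0 < A.det := hA.det_pos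
  have hdR : R.det ≠ 0 := by
    intro h0
    rw [← h, Matrix.det_mul, h0, mul_zero] at hdA
    exact lt_irrefl _ hdA
  have hRunit : IsUnit R.det := hdR.isUnit
  have hTh : (R⁻¹)ᴴ = R⁻¹ := by rw [Matrix.conjTranspose_nonsing_inv, hherm]
  have hB' : (R⁻¹ * B * R⁻¹).PosSemidef := by
    have := hB.mul_mul_conjTranspose_same (R⁻¹)
    rwa [hTh] at this
  have hdecomp : A + B = R * (1 + R⁻¹ * B * R⁻¹) * R := by
    rw [mul_add, add_mul, mul_one, h]
    congr 1
    rw [← Matrix.mul_assoc, ← Matrix.mul_assoc, Matrix.mul_nonsing_inv _ hRunit, Matrix.one_mul,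
      Matrix.mul_assoc, Matrix.nonsing_inv_mul _ hRunit, Matrix.mul_one]
  have hkey := det_one_add_psd hB'
  have hdetT : (R⁻¹).det = (R.det)⁻¹ := by
    rw [Matrix.det_nonsing_inv, Ring.inverse_eq_inv']
  have hdB' : (R⁻¹ * B * R⁻¹).det = B.det / (R.det * R.det) := by
    rw [Matrix.det_mul, Matrix.det_mul, hdetT]
    field_simp
  have hdA' : A.det = R.det * R.det := by rw [← h, Matrix.det_mul]
  rw [hdecomp, Matrix.det_mul, Matrix.det_mul]
  have hR2 : 0 < R.det * R.det := by rw [← hdA']; exact hdA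
  calc A.det + B.det = (R.det * R.det) * (1 + B.det / (R.det * R.det)) := by
        field_simp [hdA']
        linear_combination hdA'
    _ ≤ (R.det * R.det) * (1 + R⁻¹ * B * R⁻¹).det := by
        rw [← hdB']
        exact mul_le_mul_of_nonneg_left hkey hR2.le
    _ = R.det * (1 + R⁻¹ * B * R⁻¹).det * R.det := by ring

lemma det_superadd [Nonempty n] {A B : Matrix n n ℝ} (hA : A.PosSemidef) (hB : B.PosSemidef) :
    A.det + B.det ≤ (A + B).det := by
  rcases eq_or_ne A.det 0 with hdA | hdA
  · rcases eq_or_ne B.det 0 with hdB | hdB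
    · rw [hdA, hdB, add_zero]
      exact psd_det_nonneg (hA.add hB)
    · rw [add_comm A B, add_comm A.det]
      exact det_superadd_core (psd_posdef_of_det_ne_zero hB hdB) hA
  · exact det_superadd_core (psd_posdef_of_det_ne_zero hA hdA) hB

lemma det_piecewise_one (M : Matrix n n ℝ) (s : Finset n) :
    Matrix.det (s.piecewise (M : n → n → ℝ) (1 : Matrix n n ℝ)) =
      (M.submatrix (fun i : {x // x ∈ s} => (i : n)) (fun i : {x // x ∈ s} => (i : n))).det := by
  classical
  let e : {x // x ∈ s} ⊕ {x // x ∉ s} ≃ n := Equiv.sumCompl (· ∈ s)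
  refine (Matrix.det_submatrix_equiv_self e _).symm.trans ?_
  have hblock : Matrix.submatrix (s.piecewise (M : n → n → ℝ) (1 : Matrix n n ℝ)) e e =
      Matrix.fromBlocks
        (M.submatrix (fun i : {x // x ∈ s} => (i : n)) (fun i : {x // x ∈ s} => (i : n)))
        (M.submatrix (fun i : {x // x ∈ s} => (i : n)) (fun i : {x // x ∉ s} => (i : n)))
        0 1 := by
    ext i j
    rcases i with i | i <;> rcases j with j | j
    · simp [Matrix.submatrix, Finset.piecewise, i.2, e]
    · simp [Matrix.submatrix, Finset.piecewise, i.2, e]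
    · have hne : (i : n) ≠ (j : n) := fun h => i.2 (h ▸ j.2)
      simp [Matrix.submatrix, Finset.piecewise, i.2, Matrix.one_apply, hne, e]
    · simp [Matrix.submatrix, Finset.piecewise, i.2, Matrix.one_apply, Subtype.ext_iff, e]
      congr 1
  rw [hblock, Matrix.det_fromBlocks_zero₂₁, Matrix.det_one, mul_one]

lemma det_add_one_expand (M : Matrix n n ℝ) :
    (M + 1).det = ∑ s : Finset n,
      (M.submatrix (fun i : {x // x ∈ s} => (i : n)) (fun i : {x // x ∈ s} => (i : n))).det := by
  classical
  have h := (Matrix.detRowAlternating (n := n) (R := ℝ)).toMultilinearMap.map_add_univ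
    (M : n → n → ℝ) (1 : Matrix n n ℝ)
  exact h.trans (Finset.sum_congr rfl fun s _ => det_piecewise_one M s)

lemma key_one {A B : Matrix n n ℝ} (hA : A.PosSemidef) (hB : B.PosSemidef) :
    (A + 1).det + (B + 1).det ≤ (A + B + 1).det + 1 := by
  classical
  rw [det_add_one_expand, det_add_one_expand, det_add_one_expand]
  have step : ∀ s : Finset n,
      (A.submatrix (fun i : {x // x ∈ s} => (i : n)) (fun i : {x // x ∈ s} => (i : n))).det
        + (B.submatrix (fun i : {x // x ∈ s} => (i : n)) (fun i : {x // x ∈ s} => (i : n))).det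
      ≤ ((A + B).submatrix (fun i : {x // x ∈ s} => (i : n)) (fun i : {x // x ∈ s} => (i : n))).det
        + (if s = ∅ then (1:ℝ) else 0) := by
    intro s
    rcases eq_or_ne s ∅ with rfl | hne
    · have : IsEmpty {x : n // x ∈ (∅ : Finset n)} := ⟨fun x => (Finset.notMem_empty _ x.2)⟩
      simp
    · have : Nonempty {x // x ∈ s} := by
        obtain ⟨a, ha⟩ := Finset.nonempty_iff_ne_empty.mpr hne
        exact ⟨⟨a, ha⟩⟩
      have h := det_superadd (hA.submatrix (fun i : {x // x ∈ s} => (i : n)))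
        (hB.submatrix (fun i : {x // x ∈ s} => (i : n)))
      simpa [hne, Matrix.submatrix_add] using h
  calc (∑ s : Finset n,
        (A.submatrix (fun i : {x // x ∈ s} => (i : n)) (fun i : {x // x ∈ s} => (i : n))).det)
      + ∑ s : Finset n,
        (B.submatrix (fun i : {x // x ∈ s} => (i : n)) (fun i : {x // x ∈ s} => (i : n))).det
      = ∑ s : Finset n,
        ((A.submatrix (fun i : {x // x ∈ s} => (i : n)) (fun i : {x // x ∈ s} => (i : n))).det
          + (B.submatrix (fun i : {x // x ∈ s} => (i : n)) (fun i : {x // x ∈ s} => (i : n))).det) :=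
        Finset.sum_add_distrib.symm
    _ ≤ ∑ s : Finset n,
        (((A + B).submatrix (fun i : {x // x ∈ s} => (i : n)) (fun i : {x // x ∈ s} => (i : n))).det
          + (if s = ∅ then (1:ℝ) else 0)) := Finset.sum_le_sum (fun s _ => step s)
    _ = (∑ s : Finset n,
        ((A + B).submatrix (fun i : {x // x ∈ s} => (i : n)) (fun i : {x // x ∈ s} => (i : n))).det)
        + 1 := by
        rw [Finset.sum_add_distrib]
        congr 1
        simp

lemma key_posdef {A B C : Matrix n n ℝ} (hA : A.PosSemidef) (hB : B.PosSemidef)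
    (hC : C.PosDef) : (A + C).det + (B + C).det ≤ (A + B + C).det + C.det := by
  obtain ⟨R, hherm, h⟩ : ∃ R : Matrix n n ℝ, Rᴴ = R ∧ R * R = C :=
    ⟨CFC.sqrt C, (CFC.sqrt_nonneg C).posSemidef.isHermitian, CFC.sqrt_mul_sqrt_self C hC.posSemidef.nonneg⟩
  have hdC : 0 < C.det := hC.det_pos
  have hdR : R.det ≠ 0 := fun h0 => by
    rw [← h, Matrix.det_mul, h0, mul_zero] at hdC; exact lt_irrefl _ hdC
  have hRunit : IsUnit R.det := hdR.isUnit
  have hTh : (R⁻¹)ᴴ = R⁻¹ := by rw [Matrix.conjTranspose_nonsing_inv, hherm]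
  have hA' : (R⁻¹ * A * R⁻¹).PosSemidef := by
    have := hA.mul_mul_conjTranspose_same (R⁻¹); rwa [hTh] at this
  have hB' : (R⁻¹ * B * R⁻¹).PosSemidef := by
    have := hB.mul_mul_conjTranspose_same (R⁻¹); rwa [hTh] at this
  have hkey := key_one hA' hB'
  have conj : ∀ X : Matrix n n ℝ, X.PosSemidef → R * (R⁻¹ * X * R⁻¹ + 1) * R = X + C := by
    intro X _
    rw [Matrix.mul_add, Matrix.add_mul, Matrix.mul_one, h]
    congr 1
    rw [← Matrix.mul_assoc, ← Matrix.mul_assoc, Matrix.mul_nonsing_inv _ hRunit, Matrix.one_mul,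
      Matrix.nonsing_inv_mul_cancel_right _ _ hRunit]
  have e1 := conj A hA
  have e2 := conj B hB
  have e3 : R * (R⁻¹ * A * R⁻¹ + R⁻¹ * B * R⁻¹ + 1) * R = A + B + C := by
    have := conj (A + B) (hA.add hB)
    rw [← this]
    congr 2
    rw [Matrix.mul_add, Matrix.add_mul]
  have hd1 : (A + C).det = R.det * (R⁻¹ * A * R⁻¹ + 1).det * R.det := by
    rw [← e1, Matrix.det_mul, Matrix.det_mul]
  have hd2 : (B + C).det = R.det * (R⁻¹ * B * R⁻¹ + 1).det * R.det := by
    rw [← e2, Matrix.det_mul, Matrix.det_mul]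
  have hd3 : (A + B + C).det = R.det * (R⁻¹ * A * R⁻¹ + R⁻¹ * B * R⁻¹ + 1).det * R.det := by
    rw [← e3, Matrix.det_mul, Matrix.det_mul]
  have hdC' : C.det = R.det * R.det := by rw [← h, Matrix.det_mul]
  rw [hd1, hd2, hd3, hdC']
  nlinarith [hkey, sq_nonneg R.det, mul_self_nonneg R.det]

lemma det_tendsto (D : Matrix n n ℝ) :
    Filter.Tendsto (fun ε : ℝ => (D + ε • (1 : Matrix n n ℝ)).det)
      (nhdsWithin 0 (Set.Ioi 0)) (nhds D.det) := by
  have hc : Continuous fun ε : ℝ => (D + ε • (1 : Matrix n n ℝ)).det := by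
    apply Continuous.matrix_det
    exact continuous_const.add (continuous_id.smul continuous_const)
  have := hc.tendsto 0
  simp only [zero_smul, add_zero] at this
  exact this.mono_left nhdsWithin_le_nhds

lemma smul_one_posdef {ε : ℝ} (hε : 0 < ε) : (ε • (1 : Matrix n n ℝ)).PosDef := by
  have h1 : ε • (1 : Matrix n n ℝ) = Matrix.diagonal (fun _ => ε) := by
    ext i j
    simp [Matrix.one_apply, Matrix.diagonal_apply, mul_ite]
  rw [h1]
  exact Matrix.PosDef.diagonal (fun _ => hε)

theorem stmt_12 (N : ℕ) (A B C : Matrix (Fin N) (Fin N) ℝ)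
    (hA : A.PosSemidef) (hB : B.PosSemidef) (hC : C.PosSemidef) :
    (A + C).det + (B + C).det ≤ (A + B + C).det + C.det := by
  have key : ∀ ε ∈ Set.Ioi (0:ℝ),
      ((A + C) + ε • (1 : Matrix (Fin N) (Fin N) ℝ)).det
        + ((B + C) + ε • (1 : Matrix (Fin N) (Fin N) ℝ)).det
      ≤ ((A + B + C) + ε • (1 : Matrix (Fin N) (Fin N) ℝ)).det
        + (C + ε • (1 : Matrix (Fin N) (Fin N) ℝ)).det := by
    intro ε hε
    have hCe : (C + ε • (1 : Matrix (Fin N) (Fin N) ℝ)).PosDef :=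
      Matrix.PosDef.posSemidef_add hC (smul_one_posdef hε)
    have := key_posdef hA hB hCe
    calc ((A + C) + ε • (1 : Matrix (Fin N) (Fin N) ℝ)).det
          + ((B + C) + ε • (1 : Matrix (Fin N) (Fin N) ℝ)).det
        = (A + (C + ε • (1 : Matrix (Fin N) (Fin N) ℝ))).det
          + (B + (C + ε • (1 : Matrix (Fin N) (Fin N) ℝ))).det := by rw [add_assoc, add_assoc]
      _ ≤ (A + B + (C + ε • (1 : Matrix (Fin N) (Fin N) ℝ))).det
          + (C + ε • (1 : Matrix (Fin N) (Fin N) ℝ)).det := this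
      _ = ((A + B + C) + ε • (1 : Matrix (Fin N) (Fin N) ℝ)).det
          + (C + ε • (1 : Matrix (Fin N) (Fin N) ℝ)).det := by
          congr 2
          abel
  exact le_of_tendsto_of_tendsto ((det_tendsto (A + C)).add (det_tendsto (B + C)))
    ((det_tendsto (A + B + C)).add (det_tendsto C))
    (eventually_nhdsWithin_of_forall key)
end

section
/- If U and V are real symmetric positive definite N×N matrices with U ≤ V in the Löwner order, then det(U)·trace(U⁻¹) ≤ det(V)·trace(V⁻¹). -/
open Matrix

private lemma psd_det_nonneg_s13 {n : Type*} [Fintype n] [DecidableEq n]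
    {A : Matrix n n ℝ} (hA : A.PosSemidef) : 0 ≤ A.det := by
  rw [hA.isHermitian.det_eq_prod_eigenvalues]
  exact Finset.prod_nonneg fun i _ => by simpa using hA.eigenvalues_nonneg i

private lemma psd_posDef_of_det_ne_zero {n : Type*} [Fintype n] [DecidableEq n]
    {A : Matrix n n ℝ} (hA : A.PosSemidef) (hd : A.det ≠ 0) : A.PosDef := by
  exact hA.posDef_iff_det_ne_zero.mpr hd

private lemma one_le_det_of_sub_one_psd {n : Type*} [Fintype n] [DecidableEq n]
    {A : Matrix n n ℝ} (h : (A - 1).PosSemidef) : 1 ≤ A.det := by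
  have hA : A.IsHermitian := by
    have := h.isHermitian.add (Matrix.isHermitian_one (n := n) (α := ℝ))
    simpa using this
  have key : ∀ i, 1 ≤ hA.eigenvalues i := by
    intro i
    have h2 := h.dotProduct_mulVec_nonneg ⇑(hA.eigenvectorBasis i)
    have hv1 : star ⇑(hA.eigenvectorBasis i) ⬝ᵥ ⇑(hA.eigenvectorBasis i) = 1 := by
      have := hA.eigenvectorBasis.orthonormal.1 i
      simp only [dotProduct_comm (star _), ← EuclideanSpace.inner_eq_star_dotProduct, real_inner_self_eq_norm_sq, this,
        one_pow]
    have hmul := hA.mulVec_eigenvectorBasis i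
    rw [Matrix.sub_mulVec, Matrix.one_mulVec, dotProduct_sub, hmul,
    dotProduct_smul, hv1, smul_eq_mul, mul_one, sub_nonneg] at h2
    simpa using h2
  rw [hA.det_eq_prod_eigenvalues]
  have := Finset.prod_le_prod (s := Finset.univ) (f := fun _ => (1:ℝ))
    (g := fun i => hA.eigenvalues i) (fun i _ => zero_le_one) (fun i _ => key i)
  simpa using this

open scoped MatrixOrder in
private lemma det_mono_pd {n : Type*} [Fintype n] [DecidableEq n]
    {U V : Matrix n n ℝ} (hU : U.PosDef) (h : (V - U).PosSemidef) : U.det ≤ V.det := by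
  set S := CFC.sqrt U with hSdef
  have hS : S.PosSemidef := (CFC.sqrt_nonneg U).posSemidef
  have hSS : S * S = U := CFC.sqrt_mul_sqrt_self U hU.posSemidef.nonneg
  have hdetS : S.det * S.det = U.det := by rw [← Matrix.det_mul, hSS]
  have hUd : 0 < U.det := hU.det_pos
  have hdS : S.det ≠ 0 := by intro h0; rw [h0, mul_zero] at hdetS; exact hUd.ne' hdetS.symm
  have hdSu : IsUnit S.det := hdS.isUnit
  have hSinvH : (S⁻¹).IsHermitian := hS.isHermitian.inv
  have key : (S⁻¹ * (V - U) * (S⁻¹)ᴴ).PosSemidef := h.mul_mul_conjTranspose_same S⁻¹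
  rw [hSinvH.eq] at key
  have expand : S⁻¹ * (V - U) * S⁻¹ = S⁻¹ * V * S⁻¹ - 1 := by
    rw [mul_sub, sub_mul]
    congr 1
    rw [← hSS, ← mul_assoc, Matrix.nonsing_inv_mul S hdSu, one_mul,
      Matrix.mul_nonsing_inv S hdSu]
  rw [expand] at key
  have hone := one_le_det_of_sub_one_psd key
  rw [Matrix.det_mul, Matrix.det_mul, Matrix.det_nonsing_inv, Ring.inverse_eq_inv'] at hone
  have h3 : U.det * (S.det⁻¹ * V.det * S.det⁻¹) = V.det := by
    rw [← hdetS]; field_simp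
  calc U.det = U.det * 1 := (mul_one _).symm
    _ ≤ U.det * (S.det⁻¹ * V.det * S.det⁻¹) := by
        exact mul_le_mul_of_nonneg_left hone hUd.le
    _ = V.det := h3

private lemma det_mono_psd {n : Type*} [Fintype n] [DecidableEq n]
    {U V : Matrix n n ℝ} (hU : U.PosSemidef) (h : (V - U).PosSemidef) : U.det ≤ V.det := by
  by_cases hd : U.det = 0
  · rw [hd]
    have hV : V.PosSemidef := by simpa using hU.add h
    exact psd_det_nonneg_s13 hV
  · exact det_mono_pd (psd_posDef_of_det_ne_zero hU hd) h

theorem stmt_13 (N : ℕ) (U V : Matrix (Fin N) (Fin N) ℝ)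
    (hU : U.PosDef) (hV : V.PosDef) (hUV : (V - U).PosSemidef) :
    U.det * (U⁻¹).trace ≤ V.det * (V⁻¹).trace := by
  cases N with
  | zero => simp [Matrix.trace]
  | succ n =>
    have hUd := hU.det_pos
    have hVd := hV.det_pos
    have hL : ∀ (A : Matrix (Fin (n+1)) (Fin (n+1)) ℝ), A.det ≠ 0 →
        A.det * (A⁻¹).trace = ∑ i : Fin (n+1), (A.submatrix i.succAbove i.succAbove).det := by
      intro A hA
      rw [Matrix.inv_def, Matrix.trace_smul, Ring.inverse_eq_inv', smul_eq_mul,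
        ← mul_assoc, mul_inv_cancel₀ hA, one_mul, Matrix.trace]
      refine Finset.sum_congr rfl fun i _ => ?_
      rw [Matrix.diag_apply, Matrix.adjugate_fin_succ_eq_det_submatrix]
      have he : ((-1 : ℝ)) ^ ((i : ℕ) + i) = 1 := Even.neg_one_pow ⟨i, rfl⟩
      rw [he, one_mul]
    rw [hL U hUd.ne', hL V hVd.ne']
    refine Finset.sum_le_sum fun i _ => ?_
    have h1 : (U.submatrix i.succAbove i.succAbove).PosSemidef :=
      hU.posSemidef.submatrix _
    have h2 : (V.submatrix i.succAbove i.succAbove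
        - U.submatrix i.succAbove i.succAbove).PosSemidef := hUV.submatrix _
    exact det_mono_psd h1 h2
end

section
/- The log-sum-exp function is comonotonic strongly superadditive: for all x, y, z ∈ ℝ₊ᴺ with x and y comonotonic (i.e., (x_i − x_j)(y_i − y_j) ≥ 0 for all i, j), one has LSE(x+y+z) + LSE(z) ≥ LSE(x+z) + LSE(y+z), where LSE(u) = log((1/N)∑_k e^{u_k}). -/
noncomputable def LSE {N : ℕ} (x : Fin N → ℝ) : ℝ :=
  Real.log ((1 / (N : ℝ)) * ∑ k, Real.exp (x k))

/-- Weighted Chebyshev sum inequality. -/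
lemma chebyshev_weighted {N : ℕ} (u v w : Fin N → ℝ) (hw : ∀ k, 0 ≤ w k)
    (hmono : ∀ i j, 0 ≤ (u i - u j) * (v i - v j)) :
    (∑ i, u i * w i) * (∑ i, v i * w i) ≤ (∑ i, w i) * (∑ i, u i * v i * w i) := by
  have key : 0 ≤ ∑ i, ∑ j, (w i * w j) * ((u i - u j) * (v i - v j)) := by
    apply Finset.sum_nonneg; intro i _
    apply Finset.sum_nonneg; intro j _
    exact mul_nonneg (mul_nonneg (hw i) (hw j)) (hmono i j)
  have h1 : ∀ i : Fin N, ∑ j, (w i * w j) * ((u i - u j) * (v i - v j))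
      = u i * v i * w i * (∑ j, w j) - u i * w i * (∑ j, v j * w j)
        - v i * w i * (∑ j, u j * w j) + w i * (∑ j, u j * v j * w j) := by
    intro i
    rw [Finset.mul_sum, Finset.mul_sum, Finset.mul_sum, Finset.mul_sum,
      ← Finset.sum_sub_distrib, ← Finset.sum_sub_distrib, ← Finset.sum_add_distrib]
    exact Finset.sum_congr rfl fun j _ => by ring
  have h2 : ∑ i, ∑ j, (w i * w j) * ((u i - u j) * (v i - v j))
      = 2 * ((∑ i, w i) * (∑ i, u i * v i * w i)
        - (∑ i, u i * w i) * (∑ i, v i * w i)) := by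
    simp only [h1]
    rw [Finset.sum_add_distrib, Finset.sum_sub_distrib, Finset.sum_sub_distrib,
      ← Finset.sum_mul, ← Finset.sum_mul, ← Finset.sum_mul, ← Finset.sum_mul]
    ring
  rw [h2] at key
  linarith

theorem stmt_17 (N : ℕ) (x y z : Fin N → ℝ)
    (hx : ∀ k, 0 ≤ x k) (hy : ∀ k, 0 ≤ y k) (hz : ∀ k, 0 ≤ z k)
    (hcom : ∀ i j, 0 ≤ (x i - x j) * (y i - y j)) :
    LSE (x + z) + LSE (y + z) ≤ LSE (x + y + z) + LSE z := by
  rcases Nat.eq_zero_or_pos N with hN | hN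
  · subst hN
    simp [LSE]
  have hne : Nonempty (Fin N) := ⟨⟨0, hN⟩⟩
  -- exp preserves comonotonicity
  have hmono : ∀ i j, 0 ≤ (Real.exp (x i) - Real.exp (x j)) *
      (Real.exp (y i) - Real.exp (y j)) := by
    intro i j
    rcases le_total (x i) (x j) with h | h <;> rcases le_total (y i) (y j) with h' | h'
    · nlinarith [Real.exp_le_exp.mpr h, Real.exp_le_exp.mpr h']
    · have hz0 : (x i - x j) * (y i - y j) = 0 :=
        le_antisymm (mul_nonpos_of_nonpos_of_nonneg (by linarith) (by linarith)) (hcom i j)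
      rcases mul_eq_zero.mp hz0 with h0 | h0
      · have : x i = x j := by linarith [sub_eq_zero.mp h0]
        simp [this]
      · have : y i = y j := by linarith [sub_eq_zero.mp h0]
        simp [this]
    · have hz0 : (x i - x j) * (y i - y j) = 0 :=
        le_antisymm (mul_nonpos_of_nonneg_of_nonpos (by linarith) (by linarith)) (hcom i j)
      rcases mul_eq_zero.mp hz0 with h0 | h0
      · have : x i = x j := by linarith [sub_eq_zero.mp h0]
        simp [this]
      · have : y i = y j := by linarith [sub_eq_zero.mp h0]
        simp [this]
    · exact mul_nonneg (by simp [Real.exp_le_exp, h]) (by simp [Real.exp_le_exp, h'])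
  set S1 := ∑ k, Real.exp ((x + z) k) with hS1
  set S2 := ∑ k, Real.exp ((y + z) k) with hS2
  set S3 := ∑ k, Real.exp ((x + y + z) k) with hS3
  set S4 := ∑ k, Real.exp (z k) with hS4
  have hS1pos : 0 < S1 := Finset.sum_pos (fun k _ => Real.exp_pos _) Finset.univ_nonempty
  have hS2pos : 0 < S2 := Finset.sum_pos (fun k _ => Real.exp_pos _) Finset.univ_nonempty
  have hS3pos : 0 < S3 := Finset.sum_pos (fun k _ => Real.exp_pos _) Finset.univ_nonempty
  have hS4pos : 0 < S4 := Finset.sum_pos (fun k _ => Real.exp_pos _) Finset.univ_nonempty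
  have hNpos : (0 : ℝ) < 1 / (N : ℝ) := by positivity
  have key : S1 * S2 ≤ S4 * S3 := by
    have e1 : S1 = ∑ k, Real.exp (x k) * Real.exp (z k) := by
      simp [hS1, Pi.add_apply, Real.exp_add]
    have e2 : S2 = ∑ k, Real.exp (y k) * Real.exp (z k) := by
      simp [hS2, Pi.add_apply, Real.exp_add]
    have e3 : S3 = ∑ k, Real.exp (x k) * Real.exp (y k) * Real.exp (z k) := by
      simp [hS3, Pi.add_apply, Real.exp_add, mul_assoc]
    rw [e1, e2, e3]
    exact chebyshev_weighted (fun k => Real.exp (x k)) (fun k => Real.exp (y k))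
      (fun k => Real.exp (z k)) (fun k => (Real.exp_pos _).le) hmono
  show Real.log (1 / (N : ℝ) * S1) + Real.log (1 / (N : ℝ) * S2)
      ≤ Real.log (1 / (N : ℝ) * S3) + Real.log (1 / (N : ℝ) * S4)
  rw [← Real.log_mul (by positivity) (by positivity),
    ← Real.log_mul (by positivity) (by positivity)]
  apply Real.log_le_log (by positivity)
  calc 1 / (N : ℝ) * S1 * (1 / (N : ℝ) * S2) = (1 / (N : ℝ) * (1 / (N : ℝ))) * (S1 * S2) := by ring
    _ ≤ (1 / (N : ℝ) * (1 / (N : ℝ))) * (S4 * S3) := by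
        exact mul_le_mul_of_nonneg_left key (by positivity)
    _ = 1 / (N : ℝ) * S3 * (1 / (N : ℝ) * S4) := by ring
end

section
/- Let C be a convex cone in a real vector space and Φ : C → ℝ≥0 be strongly superadditive (Φ(x+y+z) + Φ(z) ≥ Φ(x+z) + Φ(y+z)) and monotone (x ≤ y in C implies Φ(x) ≤ Φ(y), where x ≤ y means y − x ∈ C). Then for every nondecreasing convex function f defined on an interval containing the range of Φ, and all x, y, z ∈ C: f(Φ(x+y+z)) + f(Φ(z)) ≥ f(Φ(x+z)) + f(Φ(y+z)). -/
lemma aux_weyl (S : Set ℝ) (f : ℝ → ℝ) (hconv : ConvexOn ℝ S f) (hf : MonotoneOn f S)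
    (a b B s : ℝ) (ha : a ∈ S) (hb : b ∈ S) (hB : B ∈ S) (hs : s ∈ S)
    (haB : a ≤ B) (hbB : b ≤ B) (hsum : a + b ≤ B + s) :
    f a + f b ≤ f B + f s := by
  by_cases hsB : B ≤ s
  · have h1 : f a ≤ f B := hf ha hB haB
    have h2 : f b ≤ f s := hf hb hs (hbB.trans hsB)
    linarith
  push_neg at hsB
  by_cases hbs : b ≤ s
  · have h1 : f a ≤ f B := hf ha hB haB
    have h2 : f b ≤ f s := hf hb hs hbs
    linarith
  by_cases has : a ≤ s
  · have h1 : f b ≤ f B := hf hb hB hbB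
    have h2 : f a ≤ f s := hf ha hs has
    linarith
  push_neg at hbs has
  have hBs : (0:ℝ) < B - s := by linarith
  set wa := (a - s) / (B - s) with hwa
  set wb := (b - s) / (B - s) with hwb
  have hwa0 : 0 ≤ wa := div_nonneg (by linarith) hBs.le
  have hwb0 : 0 ≤ wb := div_nonneg (by linarith) hBs.le
  have hwa1 : wa ≤ 1 := by rw [hwa, div_le_one hBs]; linarith
  have hwb1 : wb ≤ 1 := by rw [hwb, div_le_one hBs]; linarith
  have hfa : f a ≤ (1 - wa) * f s + wa * f B := by
    have := hconv.2 hs hB (by linarith : (0:ℝ) ≤ 1 - wa) hwa0 (by ring)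
    have heq : (1 - wa) • s + wa • B = a := by
      rw [hwa, smul_eq_mul, smul_eq_mul]; field_simp [hBs.ne']; ring
    rwa [heq] at this
  have hfb : f b ≤ (1 - wb) * f s + wb * f B := by
    have := hconv.2 hs hB (by linarith : (0:ℝ) ≤ 1 - wb) hwb0 (by ring)
    have heq : (1 - wb) • s + wb • B = b := by
      rw [hwb, smul_eq_mul, smul_eq_mul]; field_simp [hBs.ne']; ring
    rwa [heq] at this
  have hΛ : wa + wb ≤ 1 := by
    rw [hwa, hwb, ← add_div, div_le_one hBs]; linarith
  have hfsB : f s ≤ f B := hf hs hB hsB.le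
  nlinarith [hfa, hfb]

theorem stmt_19 (V : Type*) [AddCommGroup V] [Module ℝ V]
    (C : ConvexCone ℝ V) (Φ : V → ℝ)
    (hpos : ∀ x ∈ C, 0 ≤ Φ x)
    (hsuper : ∀ x ∈ C, ∀ y ∈ C, ∀ z ∈ C,
      Φ (x + z) + Φ (y + z) ≤ Φ (x + y + z) + Φ z)
    (hmono : ∀ x ∈ C, ∀ y ∈ C, y - x ∈ C → Φ x ≤ Φ y)
    (S : Set ℝ) (hS : Convex ℝ S) (hrange : ∀ x ∈ C, Φ x ∈ S)
    (f : ℝ → ℝ) (hconv : ConvexOn ℝ S f) (hf : MonotoneOn f S) :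
    ∀ x ∈ C, ∀ y ∈ C, ∀ z ∈ C,
      f (Φ (x + z)) + f (Φ (y + z)) ≤ f (Φ (x + y + z)) + f (Φ z) := by
  intro x hx y hy z hz
  have hxz : x + z ∈ C := C.add_mem hx hz
  have hyz : y + z ∈ C := C.add_mem hy hz
  have hxyz : x + y + z ∈ C := C.add_mem (C.add_mem hx hy) hz
  have haB : Φ (x + z) ≤ Φ (x + y + z) := by
    apply hmono _ hxz _ hxyz
    have : x + y + z - (x + z) = y := by abel
    rwa [this]
  have hbB : Φ (y + z) ≤ Φ (x + y + z) := by
    apply hmono _ hyz _ hxyz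
    have : x + y + z - (y + z) = x := by abel
    rwa [this]
  exact aux_weyl S f hconv hf _ _ _ _ (hrange _ hxz) (hrange _ hyz)
    (hrange _ hxyz) (hrange _ hz) haB hbB (hsuper x hx y hy z hz)
end
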